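/- Let P ⊆ ℝ², let G, W ⊆ P be finite with conv(AGP(G,W)) full-dimensional, and let W̄ = {w_1, …, w_k} ⊆ W with k ≥ 3 odd, such that: (1) no guard in G sees more than two witnesses of W̄; (2) whenever a guard in G sees two witnesses w_i ≠ w_j ∈ W̄, they are a successive pair, i.e., j = i+1, or i = 1 and j = k; (3) each of the k successive pairs is seen by some g ∈ G (a single guard seeing both); and (4) no guard in G ∩ V(W̄) sees a witness of W outside of W̄. Then the inequality ∑_{g ∈ V(W̄) ∩ G} x_g ≥ ⌈k/2⌉ is a facet of conv(AGP(G,W)). -/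
import Mathlib


open scoped Classical

/-- Points of the Euclidean plane. -/
abbrev Pt := EuclideanSpace ℝ (Fin 2)

/-- Visibility region of `p` in `P`. -/
def Vis (P : Set Pt) (p : Pt) : Set Pt := {q ∈ P | segment ℝ p q ⊆ P}

/-- Feasible binary solutions of `AGP(G,W)`. -/
def Feasible (P : Set Pt) (G W : Finset Pt) : Set (↥G → ℝ) :=
  {x | (∀ g, x g = 0 ∨ x g = 1) ∧
    ∀ w ∈ W, ∃ g : ↥G, (g : Pt) ∈ Vis P w ∧ x g = 1}

/-- `a ⬝ x ≥ b` is a facet of `conv F ⊆ ℝ^G`: it is valid for all feasible solutions,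
and the face where it holds with equality has affine dimension `|G| - 1`. -/
def IsFacet (G : Finset Pt) (F : Set (↥G → ℝ)) (a : ↥G → ℝ) (b : ℝ) : Prop :=
  (∀ x ∈ F, b ≤ ∑ g : ↥G, a g * x g) ∧
  Module.finrank ℝ
      (affineSpan ℝ {x | x ∈ convexHull ℝ F ∧ ∑ g : ↥G, a g * x g = b}).direction
    = G.card - 1

/-- Indices `i, j` (0-indexed in `Fin k`) form a successive pair of
`W̄ = {w 0, …, w (k-1)}`: the pairs `{i, i+1}` for `i < k - 1` together with
`{k-1, 0}`. -/
def Successive (k : ℕ) (i j : Fin k) : Prop :=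
  (j : ℕ) = (i : ℕ) + 1 ∨ (i : ℕ) = (j : ℕ) + 1 ∨
  ((i : ℕ) = k - 1 ∧ (j : ℕ) = 0) ∨ ((j : ℕ) = k - 1 ∧ (i : ℕ) = 0)

lemma mod_cancel {k n a b : ℕ} (h : (n + a) % k = (n + b) % k) : a % k = b % k :=
  Nat.ModEq.add_left_cancel (Nat.ModEq.refl n) h

lemma cover_nat (k n m : ℕ) (hk : 3 ≤ k) (hm : m < k) :
    ∃ t, t < (k+1)/2 ∧ ((n + 2*t) % k = m ∨ (n + 2*t + 1) % k = m) := by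
  have hk0 : 0 < k := by omega
  have hj : n % k < k := Nat.mod_lt _ hk0
  set D := (m + k - n % k) % k with hD
  have hDlt : D < k := Nat.mod_lt _ hk0
  have key : (n + D) % k = m := by
    have h1 : (n + D) ≡ (n % k + (m + k - n % k)) [MOD k] :=
      Nat.ModEq.add (Nat.mod_modEq n k).symm (Nat.mod_modEq _ k)
    have h2 : n % k + (m + k - n % k) = m + k := by omega
    rw [h2] at h1
    have : (n + D) % k = (m + k) % k := h1
    rwa [Nat.add_mod_right, Nat.mod_eq_of_lt hm] at this
  rcases Nat.even_or_odd D with hE | hO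
  · obtain ⟨t, ht⟩ := hE
    exact ⟨t, by omega, Or.inl (by rw [show n + 2*t = n + D by omega]; exact key)⟩
  · obtain ⟨t, ht⟩ := hO
    exact ⟨t, by omega, Or.inr (by rw [show n + 2*t + 1 = n + D by omega]; exact key)⟩

/-- Let `conv(AGP(G,W))` be full-dimensional and let
`W̄ = {w 0, …, w (k-1)} ⊆ W` with `k ≥ 3` odd such that (1) no guard sees more than two
witnesses of `W̄`; (2) any two witnesses of `W̄` seen by a common guard form a
successive pair; (3) each successive pair is seen by some single guard of `G`; and
(4) no guard in `G ∩ V(W̄)` sees a witness of `W` outside `W̄`.  Then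
`∑_{g ∈ V(W̄) ∩ G} x_g ≥ ⌈k/2⌉` is a facet of `conv(AGP(G,W))`. -/
theorem ec_facet (P : Set Pt) (G W : Finset Pt) (hG : ↑G ⊆ P) (hW : ↑W ⊆ P)
    (hfull : affineSpan ℝ (convexHull ℝ (Feasible P G W)) = ⊤)
    (k : ℕ) (hk : 3 ≤ k) (hodd : Odd k)
    (w : Fin k → Pt) (hwinj : Function.Injective w) (hwW : Set.range w ⊆ ↑W)
    (h1 : ∀ g ∈ G, (Vis P g ∩ Set.range w).ncard ≤ 2)
    (h2 : ∀ g ∈ G, ∀ i j : Fin k, i ≠ j → w i ∈ Vis P g → w j ∈ Vis P g →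
      Successive k i j)
    (h3 : ∀ i j : Fin k, Successive k i j →
      ∃ g ∈ G, w i ∈ Vis P g ∧ w j ∈ Vis P g)
    (h4 : ∀ g ∈ G, g ∈ (⋃ i, Vis P (w i)) → ∀ w' ∈ W, w' ∈ Vis P g →
      w' ∈ Set.range w) :
    IsFacet G (Feasible P G W)
      (fun g => if (g : Pt) ∈ ⋃ i, Vis P (w i) then 1 else 0)
      ((k + 1) / 2 : ℕ) := by
  classical
  have hk0 : 0 < k := by omega
  have hk2 : k % 2 = 1 := Nat.odd_iff.mp hodd
  set U : Set Pt := ⋃ i, Vis P (w i) with hUdef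
  set b : ℕ := (k + 1) / 2 with hbdef
  have hb2 : 2 ≤ b := by omega
  -- basic membership facts
  have hPw : ∀ i : Fin k, w i ∈ P := fun i => hW (hwW ⟨i, rfl⟩)
  have hwWmem : ∀ i : Fin k, w i ∈ W := fun i => hwW ⟨i, rfl⟩
  have hPg : ∀ g : ↥G, (g : Pt) ∈ P := fun g => hG g.2
  have hsym : ∀ (q : Pt) (g : ↥G), q ∈ P →
      (q ∈ Vis P (g : Pt) ↔ (g : Pt) ∈ Vis P q) := by
    intro q g hq
    constructor
    · rintro ⟨-, hseg⟩; exact ⟨hPg g, by rwa [segment_symm]⟩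
    · rintro ⟨-, hseg⟩; exact ⟨hq, by rwa [segment_symm]⟩
  have hU : ∀ g : ↥G, ((g : Pt) ∈ U) ↔ ∃ i, w i ∈ Vis P (g : Pt) := by
    intro g
    rw [hUdef, Set.mem_iUnion]
    exact exists_congr fun i => (hsym (w i) g (hPw i)).symm
  -- index function
  set vv : ℕ → Fin k := fun n => ⟨n % k, Nat.mod_lt _ hk0⟩ with hvvdef
  have hvval : ∀ n, (vv n).val = n % k := fun n => rfl
  have hvvmod : ∀ n, vv (n % k) = vv n := by
    intro n; apply Fin.ext; simp [hvval, Nat.mod_mod_of_dvd, Nat.mod_mod]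
  have h1k : 1 % k = 1 := Nat.mod_eq_of_lt (by omega)
  have hvvs : ∀ n, vv (n % k + 1) = vv (n + 1) := by
    intro n; apply Fin.ext
    simp only [hvval]
    conv_rhs => rw [Nat.add_mod n 1 k, h1k]
  have hvvFin : ∀ i : Fin k, vv i.val = i := by
    intro i; apply Fin.ext; simp [hvval, Nat.mod_eq_of_lt i.isLt]
  -- edge guards
  have hsucc : ∀ i : Fin k, Successive k i (vv (i.val + 1)) := by
    intro i
    have hi := i.isLt
    rcases Nat.lt_or_ge (i.val + 1) k with h | h
    · left; rw [hvval, Nat.mod_eq_of_lt h]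
    · have : i.val = k - 1 := by omega
      right; right; left
      refine ⟨this, ?_⟩
      rw [hvval, show i.val + 1 = k by omega, Nat.mod_self]
  have h3' : ∀ i : Fin k, ∃ g : ↥G,
      w i ∈ Vis P (g : Pt) ∧ w (vv (i.val + 1)) ∈ Vis P (g : Pt) := by
    intro i
    obtain ⟨g, hgG, hg1, hg2⟩ := h3 i (vv (i.val + 1)) (hsucc i)
    exact ⟨⟨g, hgG⟩, hg1, hg2⟩
  choose gE hgE1 hgE2 using h3'
  set gS : ℕ → ↥G := fun n => gE (vv n) with hgSdef
  have hgS1 : ∀ n, w (vv n) ∈ Vis P ((gS n : ↥G) : Pt) := fun n => hgE1 (vv n)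
  have hgS2 : ∀ n, w (vv (n + 1)) ∈ Vis P ((gS n : ↥G) : Pt) := by
    intro n
    have := hgE2 (vv n)
    rwa [hvval, hvvs] at this
  have hgSmod : ∀ n, gS (n % k) = gS n := by
    intro n; simp only [hgSdef]; rw [hvvmod]
  -- injectivity of the edge guards
  have hgEinj : Function.Injective gE := by
    intro i j hij
    by_contra hne
    set g := gE i with hgdef
    have v1 : w i ∈ Vis P (g : Pt) := hgE1 i
    have v2 : w (vv (i.val + 1)) ∈ Vis P (g : Pt) := hgE2 i
    have v3 : w j ∈ Vis P (g : Pt) := by rw [hij]; exact hgE1 j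
    have v4 : w (vv (j.val + 1)) ∈ Vis P (g : Pt) := by rw [hij]; exact hgE2 j
    have hii' : vv (i.val + 1) ≠ i := by
      intro hc
      have hcv := congrArg Fin.val hc
      rw [hvval] at hcv
      have hi := i.isLt
      rcases Nat.lt_or_ge (i.val + 1) k with h | h
      · rw [Nat.mod_eq_of_lt h] at hcv; omega
      · rw [show i.val + 1 = k by omega, Nat.mod_self] at hcv; omega
    have hjj' : vv (j.val + 1) ≠ j := by
      intro hc
      have hcv := congrArg Fin.val hc
      rw [hvval] at hcv
      have hj := j.isLt
      rcases Nat.lt_or_ge (j.val + 1) k with h | h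
      · rw [Nat.mod_eq_of_lt h] at hcv; omega
      · rw [show j.val + 1 = k by omega, Nat.mod_self] at hcv; omega
    have key : ∃ a b' c : Fin k, a ≠ b' ∧ a ≠ c ∧ b' ≠ c ∧
        w a ∈ Vis P (g : Pt) ∧ w b' ∈ Vis P (g : Pt) ∧ w c ∈ Vis P (g : Pt) := by
      by_cases hc : vv (i.val + 1) = j
      · refine ⟨i, j, vv (j.val + 1), hne, ?_, Ne.symm hjj', v1, v3, v4⟩
        intro hc2
        have e1 := congrArg Fin.val hc
        have e2 := congrArg Fin.val hc2
        rw [hvval] at e1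
        rw [hvval] at e2
        have hi := i.isLt; have hj := j.isLt
        rcases Nat.lt_or_ge (i.val + 1) k with h | h
        · rw [Nat.mod_eq_of_lt h] at e1
          rcases Nat.lt_or_ge (j.val + 1) k with h' | h'
          · rw [Nat.mod_eq_of_lt h'] at e2; omega
          · rw [show j.val + 1 = k by omega, Nat.mod_self] at e2; omega
        · rw [show i.val + 1 = k by omega, Nat.mod_self] at e1
          rcases Nat.lt_or_ge (j.val + 1) k with h' | h'
          · rw [Nat.mod_eq_of_lt h'] at e2; omega
          · rw [show j.val + 1 = k by omega, Nat.mod_self] at e2; omega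
      · exact ⟨i, j, vv (i.val + 1), hne, Ne.symm hii', fun hx => hc hx.symm, v1, v3, v2⟩
    obtain ⟨a, b', c, hab, hac, hbc, va, vb, vc⟩ := key
    have hsub : ({w a, w b', w c} : Set Pt) ⊆ Vis P (g : Pt) ∩ Set.range w := by
      intro p hp
      simp only [Set.mem_insert_iff, Set.mem_singleton_iff] at hp
      rcases hp with rfl | rfl | rfl
      · exact ⟨va, ⟨a, rfl⟩⟩
      · exact ⟨vb, ⟨b', rfl⟩⟩
      · exact ⟨vc, ⟨c, rfl⟩⟩
    have hfin : (Vis P (g : Pt) ∩ Set.range w).Finite :=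
      Set.Finite.inter_of_right (Set.finite_range w) _
    have hcard3 : ({w a, w b', w c} : Set Pt).ncard = 3 := by
      rw [Set.ncard_insert_of_notMem (by
          simp only [Set.mem_insert_iff, Set.mem_singleton_iff]
          push_neg
          exact ⟨hwinj.ne hab, hwinj.ne hac⟩)
        (Set.toFinite _), Set.ncard_pair (hwinj.ne hbc)]
    have h3le : 3 ≤ (Vis P (g : Pt) ∩ Set.range w).ncard := by
      rw [← hcard3]
      exact Set.ncard_le_ncard hsub hfin
    have := h1 (g : Pt) g.2
    omega
  have hgSinj : ∀ m n, gS m = gS n → m % k = n % k := by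
    intro m n h
    have h' := hgEinj h
    have := congrArg Fin.val h'
    simpa [hvval] using this
  -- sets
  set Aset : Finset ↥G := Finset.univ.filter (fun g : ↥G => (g : Pt) ∈ U) with hAdef
  set S0 : Finset ↥G := Finset.univ.filter (fun g : ↥G => (g : Pt) ∉ U) with hS0def
  set T : ℕ → Finset ↥G :=
    fun n => (Finset.range b).image (fun t => gS (n + 2 * t)) with hTdef
  have hmemT : ∀ n (h : ↥G), h ∈ T n ↔ ∃ t < b, gS (n + 2 * t) = h := by
    intro n h; simp [hTdef]
  have hTcard : ∀ n, (T n).card = b := by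
    intro n
    rw [hTdef]
    rw [Finset.card_image_of_injOn, Finset.card_range]
    intro t ht t' ht' hgs
    simp only [Finset.coe_range, Set.mem_Iio] at ht ht'
    have h := hgSinj _ _ hgs
    have h2' := mod_cancel (k := k) (n := n) (a := 2*t) (b := 2*t') h
    rw [Nat.mod_eq_of_lt (by omega), Nat.mod_eq_of_lt (by omega)] at h2'
    omega
  have hTsub : ∀ n, T n ⊆ Aset := by
    intro n h hmem
    obtain ⟨t, _, hteq⟩ := (hmemT n h).mp hmem
    refine Finset.mem_filter.mpr ⟨Finset.mem_univ _, ?_⟩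
    exact (hU h).mpr ⟨vv (n + 2*t), by rw [← hteq]; exact hgS1 _⟩
  have hTcover : ∀ n (m : Fin k), ∃ h ∈ T n, (h : Pt) ∈ Vis P (w m) := by
    intro n m
    obtain ⟨t, ht, hc⟩ := cover_nat k n m.val hk m.isLt
    refine ⟨gS (n + 2*t), (hmemT n _).mpr ⟨t, ht, rfl⟩, ?_⟩
    rcases hc with hc | hc
    · have hm : m = vv (n + 2*t) := Fin.ext (by rw [hvval, hc])
      rw [hm]; exact (hsym _ _ (hPw _)).mp (hgS1 _)
    · have hm : m = vv (n + 2*t + 1) := Fin.ext (by rw [hvval, hc])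
      rw [hm]; exact (hsym _ _ (hPw _)).mp (hgS2 _)
  have hgST : ∀ i, gS i ∈ T (i + 1) := by
    intro i
    refine (hmemT _ _).mpr ⟨(k-1)/2, by omega, ?_⟩
    rw [show i + 1 + 2 * ((k-1)/2) = i + k by omega]
    rw [← hgSmod (i + k), Nat.add_mod_right, hgSmod]
  have hgSnT : ∀ n, gS n ∉ T (n + 2) := by
    intro n hmem
    obtain ⟨t, ht, hteq⟩ := (hmemT _ _).mp hmem
    have h := hgSinj _ _ hteq
    have h2' : (n + (2 + 2*t)) % k = (n + 0) % k := by
      rw [Nat.add_zero, show n + (2 + 2*t) = n + 2 + 2*t by omega]; exact h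
    have h3' := mod_cancel h2'
    rw [Nat.zero_mod] at h3'
    have hdvd : k ∣ 2 + 2*t := Nat.dvd_of_mod_eq_zero h3'
    have hle : k ≤ 2 + 2*t := Nat.le_of_dvd (by omega) hdvd
    have hub : 2 + 2*t ≤ k + 1 := by omega
    rcases (by omega : 2 + 2*t = k ∨ 2 + 2*t = k + 1) with hcase | hcase
    · omega
    · rw [hcase] at h3'
      rw [show k + 1 = 1 + k by omega, Nat.add_mod_right, h1k] at h3'
      omega
  -- nonemptiness and full-dimension consequences
  have hFne : (Feasible P G W).Nonempty := by
    rcases (convexHull ℝ (Feasible P G W)).eq_empty_or_nonempty with he | hne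
    · exfalso
      rw [he, AffineSubspace.span_empty] at hfull
      exact AffineSubspace.bot_ne_top ℝ (↥G → ℝ) (↥G → ℝ) hfull
    · exact convexHull_nonempty_iff.mp hne
  have hfree : ∀ g : ↥G, ∃ y ∈ Feasible P G W, y g = 0 := by
    intro g
    by_contra hcon
    push_neg at hcon
    have hF1 : ∀ y ∈ Feasible P G W, y g = 1 := fun y hy => (hy.1 g).resolve_left (hcon y hy)
    have hconv : Convex ℝ {x : ↥G → ℝ | x g = 1} := by
      intro p hp q hq a c ha hc hac
      simp only [Set.mem_setOf_eq] at *
      simp [hp, hq]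
      linarith
    have hCH : ∀ x ∈ convexHull ℝ (Feasible P G W), x g = 1 :=
      fun x hx => convexHull_min hF1 hconv hx
    have hker : vectorSpan ℝ (convexHull ℝ (Feasible P G W)) ≤
        LinearMap.ker (LinearMap.proj (R := ℝ) (φ := fun _ : ↥G => ℝ) g) := by
      rw [vectorSpan_def]
      apply Submodule.span_le.mpr
      rintro v ⟨p, hp, q, hq, rfl⟩
      simp only [SetLike.mem_coe, LinearMap.mem_ker, LinearMap.proj_apply]
      rw [vsub_eq_sub]
      simp [hCH p hp, hCH q hq]
    have htop := direction_affineSpan ℝ (convexHull ℝ (Feasible P G W))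
    rw [hfull, AffineSubspace.direction_top] at htop
    have hmem : (fun _ : ↥G => (1:ℝ)) ∈
        LinearMap.ker (LinearMap.proj (R := ℝ) (φ := fun _ : ↥G => ℝ) g) := by
      apply hker
      rw [← htop]
      exact Submodule.mem_top
    simp [LinearMap.mem_ker] at hmem
  have hnotU : ∀ (h : ↥G), ∀ w' ∈ W, w' ∉ Set.range w →
      (h : Pt) ∈ Vis P w' → (h : Pt) ∉ U := by
    intro h w' hw'W hw'r hvis hhU
    exact hw'r (h4 (h : Pt) h.2 hhU w' hw'W ((hsym w' h (hW hw'W)).mpr hvis))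
  have hS0cov : ∀ w' ∈ W, w' ∉ Set.range w → ∃ h ∈ S0, (h : Pt) ∈ Vis P w' := by
    intro w' hw' hw'r
    obtain ⟨x0, hx0⟩ := hFne
    obtain ⟨h, hvis, _⟩ := hx0.2 w' hw'
    exact ⟨h, Finset.mem_filter.mpr ⟨Finset.mem_univ _, hnotU h w' hw' hw'r hvis⟩, hvis⟩
  have hS0gcov : ∀ g : ↥G, ∀ w' ∈ W, w' ∉ Set.range w →
      ∃ h ∈ S0.erase g, (h : Pt) ∈ Vis P w' := by
    intro g w' hw' hw'r
    obtain ⟨y, hy, hyg⟩ := hfree g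
    obtain ⟨h, hvis, hy1⟩ := hy.2 w' hw'
    have hne : h ≠ g := by rintro rfl; rw [hyg] at hy1; norm_num at hy1
    exact ⟨h, Finset.mem_erase.mpr ⟨hne,
      Finset.mem_filter.mpr ⟨Finset.mem_univ _, hnotU h w' hw' hw'r hvis⟩⟩, hvis⟩
  -- point builder
  set pf : Finset ↥G → Finset ↥G → (↥G → ℝ) :=
    fun T' S => fun h => if h ∈ T' ∪ S then 1 else 0 with hpfdef
  have hpfFeas : ∀ T' S : Finset ↥G,
      (∀ m : Fin k, ∃ h ∈ T', (h : Pt) ∈ Vis P (w m)) →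
      (∀ w' ∈ W, w' ∉ Set.range w → ∃ h ∈ S, (h : Pt) ∈ Vis P w') →
      pf T' S ∈ Feasible P G W := by
    intro T' S hTc hSc
    constructor
    · intro h
      by_cases hmem : h ∈ T' ∪ S
      · right; simp only [hpfdef]; rw [if_pos hmem]
      · left; simp only [hpfdef]; rw [if_neg hmem]
    · intro w' hw'
      by_cases hr : w' ∈ Set.range w
      · obtain ⟨m, rfl⟩ := hr
        obtain ⟨h, hhT, hvis⟩ := hTc m
        exact ⟨h, hvis, by simp [hpfdef, Finset.mem_union, hhT]⟩
      · obtain ⟨h, hhS, hvis⟩ := hSc w' hw' hr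
        exact ⟨h, hvis, by simp [hpfdef, Finset.mem_union, hhS]⟩
  -- the face
  set FaceS : Set (↥G → ℝ) :=
    {x | x ∈ convexHull ℝ (Feasible P G W) ∧
      ∑ g : ↥G, (if (g : Pt) ∈ U then (1:ℝ) else 0) * x g = (b : ℝ)} with hFdef
  have hsum : ∀ x : ↥G → ℝ,
      (∑ g : ↥G, (if (g : Pt) ∈ U then (1:ℝ) else 0) * x g) = ∑ g ∈ Aset, x g := by
    intro x
    rw [hAdef, Finset.sum_filter]
    exact Finset.sum_congr rfl (fun g _ => by by_cases hp : (g : Pt) ∈ U <;> simp [hp])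
  have hpfsum : ∀ T' S : Finset ↥G, T' ⊆ Aset → S ⊆ S0 →
      (∑ g ∈ Aset, pf T' S g) = (T'.card : ℝ) := by
    intro T' S hT hS
    have hc : ∀ g ∈ Aset, pf T' S g = if g ∈ T' then (1:ℝ) else 0 := by
      intro g hg
      have hgU : (g : Pt) ∈ U := (Finset.mem_filter.mp hg).2
      have hgS : g ∉ S := fun hgs => (Finset.mem_filter.mp (hS hgs)).2 hgU
      simp only [hpfdef, Finset.mem_union]
      by_cases hgT : g ∈ T' <;> simp [hgT, hgS]
    rw [Finset.sum_congr rfl hc, Finset.sum_boole]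
    norm_cast
    congr 1
    ext g
    simp only [Finset.mem_filter]
    exact ⟨fun h => h.2, fun h => ⟨hT h, h⟩⟩
  have hFace : ∀ T' S : Finset ↥G, T' ⊆ Aset → S ⊆ S0 → T'.card = b →
      (∀ m : Fin k, ∃ h ∈ T', (h : Pt) ∈ Vis P (w m)) →
      (∀ w' ∈ W, w' ∉ Set.range w → ∃ h ∈ S, (h : Pt) ∈ Vis P w') →
      pf T' S ∈ FaceS := by
    intro T' S hsub hS hcard hcov hScov
    refine ⟨subset_convexHull ℝ _ (hpfFeas T' S hcov hScov), ?_⟩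
    rw [hsum, hpfsum T' S hsub hS, hcard]
  -- the direction submodule
  set D := (affineSpan ℝ FaceS).direction with hDdef
  have hDdiff : ∀ p q : ↥G → ℝ, p ∈ FaceS → q ∈ FaceS → p - q ∈ D := by
    intro p q hp hq
    have := AffineSubspace.vsub_mem_direction
      (subset_affineSpan ℝ FaceS hp) (subset_affineSpan ℝ FaceS hq)
    simpa using this
  -- basis vectors
  set e : ↥G → (↥G → ℝ) := fun i j => if i = j then 1 else 0 with hedef
  have hDe : ∀ g : ↥G, (g : Pt) ∉ U → e g ∈ D := by
    intro g hgU
    have hgS0 : g ∈ S0 := Finset.mem_filter.mpr ⟨Finset.mem_univ _, hgU⟩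
    have hgT : g ∉ T 0 := fun hc =>
      hgU ((Finset.mem_filter.mp (hTsub 0 hc)).2)
    have hz : pf (T 0) S0 ∈ FaceS :=
      hFace (T 0) S0 (hTsub 0) (subset_refl _) (hTcard 0) (hTcover 0) hS0cov
    have hz' : pf (T 0) (S0.erase g) ∈ FaceS :=
      hFace _ _ (hTsub 0) (Finset.erase_subset _ _) (hTcard 0) (hTcover 0) (hS0gcov g)
    have hd := hDdiff _ _ hz hz'
    have heq : pf (T 0) S0 - pf (T 0) (S0.erase g) = e g := by
      funext h
      simp only [hpfdef, hedef, Pi.sub_apply]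
      by_cases hgh : g = h
      · subst hgh
        have hin : g ∈ T 0 ∪ S0 := Finset.mem_union_right _ hgS0
        have hout : g ∉ T 0 ∪ S0.erase g := by
          intro hc
          rcases Finset.mem_union.mp hc with hc | hc
          · exact hgT hc
          · exact (Finset.mem_erase.mp hc).1 rfl
        rw [if_pos hin, if_neg hout, if_pos rfl]
        ring
      · have hne : h ≠ g := fun hh => hgh hh.symm
        have hiff : (h ∈ T 0 ∪ S0) ↔ (h ∈ T 0 ∪ S0.erase g) := by
          constructor
          · intro hc
            rcases Finset.mem_union.mp hc with hc | hc
            · exact Finset.mem_union_left _ hc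
            · exact Finset.mem_union_right _ (Finset.mem_erase.mpr ⟨hne, hc⟩)
          · intro hc
            rcases Finset.mem_union.mp hc with hc | hc
            · exact Finset.mem_union_left _ hc
            · exact Finset.mem_union_right _ (Finset.mem_of_mem_erase hc)
        by_cases hmem : h ∈ T 0 ∪ S0
        · rw [if_pos hmem, if_pos (hiff.mp hmem), if_neg hgh]; ring
        · rw [if_neg hmem, if_neg (fun hc => hmem (hiff.mpr hc)), if_neg hgh]; ring
    rw [← heq]; exact hd
  have hswap : ∀ (i : ℕ) (g : ↥G), w (vv i) ∈ Vis P (g : Pt) →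
      g ≠ gS i → g ∉ T (i + 1) → e g - e (gS i) ∈ D := by
    intro i g hsee hne hgT
    have hgU : (g : Pt) ∈ U := (hU g).mpr ⟨vv i, hsee⟩
    set Tm := (T (i+1)).erase (gS i) with hTm
    set T' := insert g Tm with hT'
    have hgTm : g ∉ Tm := fun hc => hgT (Finset.mem_of_mem_erase hc)
    have hT'card : T'.card = b := by
      rw [hT', Finset.card_insert_of_notMem hgTm, hTm,
        Finset.card_erase_of_mem (hgST i), hTcard]
      omega
    have hT'sub : T' ⊆ Aset := by
      intro h hh
      rcases Finset.mem_insert.mp hh with rfl | hh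
      · exact Finset.mem_filter.mpr ⟨Finset.mem_univ _, hgU⟩
      · exact hTsub (i+1) (Finset.mem_of_mem_erase hh)
    have hgS1ne : gS (i+1) ≠ gS i := by
      intro hc2
      have hmm := hgSinj _ _ hc2
      have h2' : (i + 1) % k = (i + 0) % k := by rw [Nat.add_zero]; exact hmm
      have h3'' := mod_cancel h2'
      rw [h1k, Nat.zero_mod] at h3''
      omega
    have hT'cov : ∀ m : Fin k, ∃ h ∈ T', (h : Pt) ∈ Vis P (w m) := by
      intro m
      by_cases hmi : m = vv i
      · exact ⟨g, Finset.mem_insert_self _ _, by rw [hmi]; exact (hsym _ g (hPw _)).mp hsee⟩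
      · obtain ⟨t, ht, hc⟩ := cover_nat k (i+1) m.val hk m.isLt
        by_cases hbad : gS (i+1+2*t) = gS i
        · have hmod : (i+1+2*t) % k = i % k := hgSinj _ _ hbad
          have hm1 : m = vv (i+1) := by
            rcases hc with hc | hc
            · exact absurd (Fin.ext (show m.val = (vv i).val by
                rw [hvval, ← hc, hmod])) hmi
            · apply Fin.ext
              rw [hvval, ← hc]
              calc (i+1+2*t+1) % k = ((i+1+2*t) % k + 1 % k) % k := Nat.add_mod _ 1 k
                _ = (i % k + 1 % k) % k := by rw [hmod]
                _ = (i + 1) % k := (Nat.add_mod i 1 k).symm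
          refine ⟨gS (i+1), ?_, ?_⟩
          · apply Finset.mem_insert_of_mem
            rw [hTm]
            refine Finset.mem_erase.mpr ⟨hgS1ne, ?_⟩
            have h20 : gS (i+1+2*0) = gS (i+1) := by norm_num
            exact (hmemT _ _).mpr ⟨0, by omega, h20⟩
          · rw [hm1]; exact (hsym _ _ (hPw _)).mp (hgS1 (i+1))
        · refine ⟨gS (i+1+2*t), Finset.mem_insert_of_mem
            (Finset.mem_erase.mpr ⟨hbad, (hmemT _ _).mpr ⟨t, ht, rfl⟩⟩), ?_⟩
          rcases hc with hc | hc
          · have hm : m = vv (i+1+2*t) := Fin.ext (by rw [hvval, hc])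
            rw [hm]; exact (hsym _ _ (hPw _)).mp (hgS1 _)
          · have hm : m = vv (i+1+2*t+1) := Fin.ext (by rw [hvval, hc])
            rw [hm]; exact (hsym _ _ (hPw _)).mp (hgS2 _)
    have hp1 : pf (T (i+1)) S0 ∈ FaceS :=
      hFace _ _ (hTsub _) (subset_refl _) (hTcard _) (hTcover _) hS0cov
    have hp2 : pf T' S0 ∈ FaceS :=
      hFace _ _ hT'sub (subset_refl _) hT'card hT'cov hS0cov
    have hd := hDdiff _ _ hp2 hp1
    have hgSiU : ((gS i : ↥G) : Pt) ∈ U := (hU _).mpr ⟨vv i, hgS1 i⟩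
    have hgSS0 : gS i ∉ S0 := by
      intro hc; exact (Finset.mem_filter.mp hc).2 hgSiU
    have hgnotS0 : g ∉ S0 := by
      intro hc; exact (Finset.mem_filter.mp hc).2 hgU
    have heq : pf T' S0 - pf (T (i+1)) S0 = e g - e (gS i) := by
      funext h
      simp only [hpfdef, hedef, Pi.sub_apply]
      by_cases h1' : h = g
      · rw [h1']
        have hin : g ∈ T' ∪ S0 := Finset.mem_union_left _ (Finset.mem_insert_self _ _)
        have hout : g ∉ T (i+1) ∪ S0 := by
          intro hc
          rcases Finset.mem_union.mp hc with hc | hc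
          · exact hgT hc
          · exact hgnotS0 hc
        rw [if_pos hin, if_neg hout, if_pos rfl, if_neg (fun hc => hne hc.symm)]
      · by_cases h2' : h = gS i
        · rw [h2']
          have hin : gS i ∈ T (i+1) ∪ S0 := Finset.mem_union_left _ (hgST i)
          have hout : gS i ∉ T' ∪ S0 := by
            intro hc
            rcases Finset.mem_union.mp hc with hc | hc
            · rcases Finset.mem_insert.mp hc with hc | hc
              · exact hne hc.symm
              · exact (Finset.mem_erase.mp hc).1 rfl
            · exact hgSS0 hc
          rw [if_neg hout, if_pos hin, if_neg (fun hc => hne hc), if_pos rfl]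
        · have hiff : (h ∈ T' ∪ S0) ↔ (h ∈ T (i+1) ∪ S0) := by
            constructor
            · intro hc
              rcases Finset.mem_union.mp hc with hc | hc
              · rcases Finset.mem_insert.mp hc with hc | hc
                · exact absurd hc h1'
                · exact Finset.mem_union_left _ (Finset.mem_of_mem_erase hc)
              · exact Finset.mem_union_right _ hc
            · intro hc
              rcases Finset.mem_union.mp hc with hc | hc
              · exact Finset.mem_union_left _
                  (Finset.mem_insert_of_mem (Finset.mem_erase.mpr ⟨h2', hc⟩))
              · exact Finset.mem_union_right _ hc
          by_cases hmem : h ∈ T (i+1) ∪ S0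
          · rw [if_pos hmem, if_pos (hiff.mpr hmem), if_neg (fun hc => h1' hc.symm),
              if_neg (fun hc => h2' hc.symm)]
            ring
          · rw [if_neg hmem, if_neg (fun hc => hmem (hiff.mp hc)),
              if_neg (fun hc => h1' hc.symm), if_neg (fun hc => h2' hc.symm)]
    rw [← heq]; exact hd
  have hchain : ∀ n, e (gS n) - e (gS (n + 1)) ∈ D := by
    intro n
    have hne : gS n ≠ gS (n+1) := by
      intro hc
      have hmm := hgSinj _ _ hc
      have h2' : (n + 0) % k = (n + 1) % k := by rw [Nat.add_zero]; exact hmm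
      have h3'' := mod_cancel h2'
      rw [h1k, Nat.zero_mod] at h3''
      omega
    exact hswap (n+1) (gS n) (hgS2 n) hne (hgSnT n)
  have htele : ∀ n, e (gS 0) - e (gS n) ∈ D := by
    intro n
    induction n with
    | zero => rw [sub_self]; exact Submodule.zero_mem D
    | succ n ih =>
      have := Submodule.add_mem D ih (hchain n)
      rwa [sub_add_sub_cancel] at this
  have hDA : ∀ g : ↥G, (g : Pt) ∈ U → e g - e (gS 0) ∈ D := by
    intro g hgU
    by_cases hr : ∃ i : Fin k, gE i = g
    · obtain ⟨i, rfl⟩ := hr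
      have hgi : gE i = gS i.val := by simp only [hgSdef]; rw [hvvFin]
      rw [hgi, ← neg_sub]
      exact Submodule.neg_mem _ (htele _)
    · obtain ⟨i, hsee⟩ := (hU g).mp hgU
      have hne1 : g ≠ gS i.val := fun hc => hr ⟨vv i.val, hc.symm⟩
      have hne2 : g ∉ T (i.val + 1) := by
        intro hc
        obtain ⟨t, _, hteq⟩ := (hmemT _ _).mp hc
        exact hr ⟨vv (i.val + 1 + 2*t), hteq⟩
      have hs := hswap i.val g (by rwa [hvvFin]) hne1 hne2
      have := Submodule.sub_mem D hs (htele i.val)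
      rwa [sub_sub_sub_cancel_right] at this
  -- the linear functional
  set L : (↥G → ℝ) →ₗ[ℝ] ℝ :=
    { toFun := fun x => ∑ g ∈ Aset, x g
      map_add' := by intros; simp [Finset.sum_add_distrib]
      map_smul' := by intros; simp [Finset.mul_sum] } with hLdef
  have hLapp : ∀ x : ↥G → ℝ, L x = ∑ g ∈ Aset, x g := fun x => rfl
  have hkerD : LinearMap.ker L ≤ D := by
    intro v hv
    have hv0 : ∑ g ∈ Aset, v g = 0 := by
      rw [← hLapp]; exact LinearMap.mem_ker.mp hv
    have e1 : v = ∑ g ∈ Aset, v g • e g + ∑ g ∈ S0, v g • e g := by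
      rw [hAdef, hS0def]
      rw [Finset.sum_filter_add_sum_filter_not Finset.univ
        (fun g : ↥G => (g : Pt) ∈ U) (fun g => v g • e g)]
      exact pi_eq_sum_univ v
    have e2 : ∑ g ∈ Aset, v g • e g = ∑ g ∈ Aset, v g • (e g - e (gS 0)) := by
      have : ∑ g ∈ Aset, v g • (e g - e (gS 0)) =
          ∑ g ∈ Aset, v g • e g - (∑ g ∈ Aset, v g) • e (gS 0) := by
        rw [Finset.sum_smul]
        rw [← Finset.sum_sub_distrib]
        exact Finset.sum_congr rfl (fun g _ => smul_sub _ _ _)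
      rw [this, hv0, zero_smul, sub_zero]
    rw [e1, e2]
    apply Submodule.add_mem
    · apply Submodule.sum_mem
      intro g hg
      have hgU : (g : Pt) ∈ U := (Finset.mem_filter.mp hg).2
      exact Submodule.smul_mem _ _ (hDA g hgU)
    · apply Submodule.sum_mem
      intro g hg
      have hgU : (g : Pt) ∉ U := (Finset.mem_filter.mp hg).2
      exact Submodule.smul_mem _ _ (hDe g hgU)
  have hDker : D ≤ LinearMap.ker L := by
    rw [hDdef, direction_affineSpan, vectorSpan_def]
    apply Submodule.span_le.mpr
    rintro v ⟨p, hp, q, hq, rfl⟩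
    rw [SetLike.mem_coe, LinearMap.mem_ker]
    have hp2 : L p = (b : ℝ) := by rw [hLapp, ← hsum]; exact hp.2
    have hq2 : L q = (b : ℝ) := by rw [hLapp, ← hsum]; exact hq.2
    show L (p -ᵥ q) = 0
    rw [vsub_eq_sub, map_sub, hp2, hq2, sub_self]
  have hgS0A : gS 0 ∈ Aset :=
    Finset.mem_filter.mpr ⟨Finset.mem_univ _, (hU _).mpr ⟨vv 0, hgS1 0⟩⟩
  have hkerrank : Module.finrank ℝ (LinearMap.ker L) = G.card - 1 := by
    have hdim : Module.finrank ℝ (↥G → ℝ) = G.card := by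
      rw [Module.finrank_pi, Fintype.card_coe]
    have hL1 : L (e (gS 0)) = 1 := by
      rw [hLapp]
      have : ∀ g ∈ Aset, e (gS 0) g = if gS 0 = g then (1:ℝ) else 0 := fun g _ => rfl
      rw [Finset.sum_congr rfl this, Finset.sum_ite_eq]
      simp [hgS0A]
    have hsurj : Function.Surjective L := by
      intro r
      exact ⟨r • e (gS 0), by rw [map_smul, hL1]; simp⟩
    have hrange : LinearMap.range L = ⊤ := LinearMap.range_eq_top.mpr hsurj
    have hrn := LinearMap.finrank_range_add_finrank_ker L
    rw [hrange, finrank_top, Module.finrank_self, hdim] at hrn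
    have hcard1 : 1 ≤ G.card := Finset.card_pos.mpr ⟨(gS 0 : Pt), (gS 0).2⟩
    omega
  constructor
  · -- validity
    intro x hx
    obtain ⟨hx01, hxcov⟩ := hx
    set SS : Finset ↥G := Finset.univ.filter (fun g : ↥G => (g : Pt) ∈ U ∧ x g = 1)
      with hSS
    have hsum2 : (∑ g : ↥G, (if (g : Pt) ∈ U then (1:ℝ) else 0) * x g) = SS.card := by
      rw [hsum]
      have hxg : ∀ g ∈ Aset, x g = if x g = 1 then (1:ℝ) else 0 := by
        intro g _; rcases hx01 g with h | h <;> simp [h]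
      rw [Finset.sum_congr rfl hxg, Finset.sum_boole]
      norm_cast
      have : Finset.filter (fun g => x g = 1) Aset = SS := by
        ext g
        simp only [hSS, hAdef, Finset.mem_filter, Finset.mem_univ, true_and]
      rw [this]
    choose f hf1 hf2 using fun m : Fin k => hxcov (w m) (hwWmem m)
    have hfSS : ∀ m, f m ∈ SS := by
      intro m
      rw [hSS]
      refine Finset.mem_filter.mpr ⟨Finset.mem_univ _, ?_, hf2 m⟩
      exact (hU _).mpr ⟨m, (hsym _ _ (hPw m)).mpr (hf1 m)⟩
    have hfiber : ∀ g : ↥G, (Finset.univ.filter (fun m : Fin k => f m = g)).card ≤ 2 := by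
      intro g
      have himg : ((Finset.univ.filter (fun m : Fin k => f m = g)).image w).card =
          (Finset.univ.filter (fun m : Fin k => f m = g)).card :=
        Finset.card_image_of_injOn (fun a _ c _ h => hwinj h)
      rw [← himg]
      have hsubs : ↑((Finset.univ.filter (fun m : Fin k => f m = g)).image w) ⊆
          Vis P (g : Pt) ∩ Set.range w := by
        intro p hp
        simp only [Finset.coe_image, Set.mem_image, Finset.mem_coe,
          Finset.mem_filter, Finset.mem_univ, true_and] at hp
        obtain ⟨m, hm, rfl⟩ := hp
        refine ⟨?_, ⟨m, rfl⟩⟩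
        have := hf1 m
        rw [hm] at this
        exact (hsym _ g (hPw m)).mpr this
      calc ((Finset.univ.filter (fun m : Fin k => f m = g)).image w).card
          = (↑((Finset.univ.filter (fun m : Fin k => f m = g)).image w) : Set Pt).ncard :=
            (Set.ncard_coe_finset _).symm
        _ ≤ (Vis P (g : Pt) ∩ Set.range w).ncard :=
            Set.ncard_le_ncard hsubs (Set.Finite.inter_of_right (Set.finite_range w) _)
        _ ≤ 2 := h1 (g : Pt) g.2
    have hcount : k ≤ 2 * SS.card := by
      have hfib := Finset.card_eq_sum_card_fiberwise
        (fun (m : Fin k) (_ : m ∈ Finset.univ) => hfSS m)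
      rw [Finset.card_univ, Fintype.card_fin] at hfib
      calc k = ∑ g ∈ SS, (Finset.univ.filter (fun m : Fin k => f m = g)).card := hfib
        _ ≤ ∑ _g ∈ SS, 2 := Finset.sum_le_sum (fun g _ => hfiber g)
        _ = 2 * SS.card := by rw [Finset.sum_const, smul_eq_mul, mul_comm]
    have hbS : b ≤ SS.card := by omega
    show (b : ℝ) ≤ ∑ g : ↥G, (if (g : Pt) ∈ U then (1:ℝ) else 0) * x g
    rw [hsum2]
    exact_mod_cast hbS
  · -- dimension
    have hDeq : D = LinearMap.ker L := le_antisymm hDker hkerD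
    show Module.finrank ℝ (affineSpan ℝ {x | x ∈ convexHull ℝ (Feasible P G W) ∧
        ∑ g : ↥G, (if (g : Pt) ∈ U then (1:ℝ) else 0) * x g = (b : ℝ)}).direction = G.card - 1
    rw [show (affineSpan ℝ {x | x ∈ convexHull ℝ (Feasible P G W) ∧
        ∑ g : ↥G, (if (g : Pt) ∈ U then (1:ℝ) else 0) * x g = (b : ℝ)}).direction = D from rfl]
    rw [hDeq, hkerrank]
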